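/- arXiv:2601.21166 — 4 statements merged into one kernel-verified Lean document; each statement's English description precedes it below -/
import Mathlib

section
/- Let Z₁, …, Z_N be independent identically distributed random variables taking values in [−1, 1], and suppose there exist ρ̄ ∈ (0, 1] and C ≥ 1 with E[Z₁] ≥ ρ̄ and E[Z₁²] ≤ C ρ̄. Then Pr(Σ_{n=1}^N Z_n ≤ 0) ≤ exp(− N ρ̄ / (2C + 4/3)). -/
open MeasureTheory ProbabilityTheory Real

lemma exp_mul_le_quad {s z : ℝ} (hs : 0 ≤ s) (hz : |z| ≤ 1) :
    Real.exp (s * z) ≤ 1 + s * z + z ^ 2 * (Real.exp s - 1 - s) := by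
  have hexpand : ∀ x : ℝ, Real.exp x - 1 - x = ∑' n : ℕ, x ^ (n + 2) / (n + 2).factorial := by
    intro x
    have hsum := Real.summable_pow_div_factorial x
    have h := Summable.sum_add_tsum_nat_add 2 hsum
    have hr : ∑ i ∈ Finset.range 2, x ^ i / (i.factorial : ℝ) = 1 + x := by
      simp [Finset.sum_range_succ]
    have hexp : Real.exp x = ∑' n : ℕ, x ^ n / n.factorial := by
      rw [Real.exp_eq_exp_ℝ, NormedSpace.exp_eq_tsum_div]
    rw [hexp, ← h, hr]
    ring
  have hterm : ∀ n : ℕ, (s * z) ^ (n + 2) / ((n + 2).factorial : ℝ)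
      ≤ z ^ 2 * (s ^ (n + 2) / ((n + 2).factorial : ℝ)) := by
    intro n
    rw [mul_div_assoc']
    apply div_le_div_of_nonneg_right ?_ (by positivity)
    · rw [mul_pow]
      have h1 : z ^ (n + 2) ≤ z ^ 2 := by
        calc z ^ (n + 2) ≤ |z ^ (n + 2)| := le_abs_self _
        _ = |z| ^ (n + 2) := abs_pow z (n + 2)
        _ ≤ |z| ^ 2 := pow_le_pow_of_le_one (abs_nonneg z) hz (by omega)
        _ = z ^ 2 := sq_abs z
      calc s ^ (n + 2) * z ^ (n + 2) ≤ s ^ (n + 2) * z ^ 2 :=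
            mul_le_mul_of_nonneg_left h1 (by positivity)
        _ = z ^ 2 * s ^ (n + 2) := mul_comm _ _
  have hs1 : Summable fun n : ℕ => (s * z) ^ (n + 2) / ((n + 2).factorial : ℝ) :=
    ((summable_nat_add_iff 2).mpr (Real.summable_pow_div_factorial (s * z)))
  have hs2 : Summable fun n : ℕ => z ^ 2 * (s ^ (n + 2) / ((n + 2).factorial : ℝ)) :=
    (((summable_nat_add_iff 2).mpr (Real.summable_pow_div_factorial s)).mul_left _)
  have := Summable.tsum_le_tsum hterm hs1 hs2
  rw [tsum_mul_left, ← hexpand, ← hexpand] at this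
  linarith

lemma keyB {C : ℝ} (hC : 1 ≤ C) :
    C * (Real.exp (1 / (C + 1 / 3)) - 1 - 1 / (C + 1 / 3))
      ≤ 1 / (C + 1 / 3) - 1 / (2 * C + 4 / 3) := by
  set s : ℝ := 1 / (C + 1 / 3) with hsdef
  have hu : (0 : ℝ) < C + 1 / 3 := by linarith
  have hs0 : 0 < s := by positivity
  have hse : s * (C + 1 / 3) = 1 := by rw [hsdef]; field_simp
  have hs34 : s ≤ 3 / 4 := by
    rw [hsdef, div_le_iff₀ hu]; linarith
  have hexp : Real.exp s ≤ 1 + s + s ^ 2 / 2 + s ^ 3 / 6 + 5 / 96 * s ^ 4 := by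
    have h := Real.exp_bound' hs0.le (by linarith) (n := 4) (by norm_num)
    norm_num [Finset.sum_range_succ, Nat.factorial] at h
    linarith [h]
  have hD : (0 : ℝ) < 2 * C + 4 / 3 := by linarith
  have hCs : C * s = 1 - s / 3 := by linear_combination hse
  have key : C * (s ^ 2 / 2 + s ^ 3 / 6 + 5 / 96 * s ^ 4) * (2 * C + 4 / 3) ≤ s * (C + 1) := by
    have hrepr : s * (C + 1) - C * (s ^ 2 / 2 + s ^ 3 / 6 + 5 / 96 * s ^ 4) * (2 * C + 4 / 3)
        = s / 3 + s ^ 2 / 144 + s ^ 3 / 27 + 5 * s ^ 4 / 432 := by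
      linear_combination (-(5/48) * C * s ^ 3 - (1/3) * C * s ^ 2 - C * s
        - (5/144) * s ^ 3 - (31/144) * s ^ 2 - (2/3) * s) * hCs
    have hpos : (0:ℝ) ≤ s / 3 + s ^ 2 / 144 + s ^ 3 / 27 + 5 * s ^ 4 / 432 := by positivity
    linarith
  have h1 : 1 / (2 * C + 4 / 3) ≤ s - C * (Real.exp s - 1 - s) := by
    rw [div_le_iff₀ hD]
    have hA : Real.exp s - 1 - s ≤ s ^ 2 / 2 + s ^ 3 / 6 + 5 / 96 * s ^ 4 := by linarith
    have hC0 : (0 : ℝ) < C := by linarith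
    have hle : C * (Real.exp s - 1 - s) * (2 * C + 4 / 3)
        ≤ C * (s ^ 2 / 2 + s ^ 3 / 6 + 5 / 96 * s ^ 4) * (2 * C + 4 / 3) := by
      apply mul_le_mul_of_nonneg_right _ hD.le
      exact mul_le_mul_of_nonneg_left hA hC0.le
    have hss : s * (2 * C + 4 / 3) = 1 + s * (C + 1) := by
      have : s * (2 * C + 4 / 3) = s * (C + 1 / 3) + s * (C + 1) := by ring
      rw [this, hse]
    nlinarith [key, hle]
  linarith


/-- Core ranking-error bound: for i.i.d. scores `Z₁, …, Z_N` in `[−1,1]` with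
`E[Z₁] ≥ ρ̄` and `E[Z₁²] ≤ C ρ̄`, the probability that the sum is nonpositive is
at most `exp(−N ρ̄ / (2C + 4/3))`. -/
theorem vote_sum_nonpos_prob_bound
    {Ω : Type*} [MeasurableSpace Ω] (μ : Measure Ω) [IsProbabilityMeasure μ]
    {N : ℕ} (hN : 0 < N) (Z : Fin N → Ω → ℝ)
    (hmeas : ∀ n, Measurable (Z n))
    (hindep : iIndepFun Z μ)
    (hident : ∀ n m, IdentDistrib (Z n) (Z m) μ μ)
    (hbdd : ∀ n ω, Z n ω ∈ Set.Icc (-1 : ℝ) 1)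
    (ρ C : ℝ) (hρ : ρ ∈ Set.Ioc (0 : ℝ) 1) (hC : 1 ≤ C)
    (hmean : ρ ≤ ∫ ω, Z ⟨0, hN⟩ ω ∂μ)
    (hvar : ∫ ω, (Z ⟨0, hN⟩ ω) ^ 2 ∂μ ≤ C * ρ) :
    μ {ω | ∑ n, Z n ω ≤ 0} ≤ ENNReal.ofReal (Real.exp (-(N * ρ) / (2 * C + 4 / 3))) := by
  obtain ⟨hρ0, hρ1⟩ := hρ
  set Z0 : Ω → ℝ := Z ⟨0, hN⟩ with hZ0
  set s : ℝ := 1 / (C + 1 / 3) with hsdef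
  have hu : (0:ℝ) < C + 1 / 3 := by linarith
  have hs0 : 0 < s := by positivity
  set t : ℝ := -s with htdef
  have ht0 : t ≤ 0 := by simp [htdef, hs0.le]
  -- integrability facts
  have hint_exp : ∀ n, Integrable (fun ω => Real.exp (t * Z n ω)) μ := by
    intro n
    refine (integrable_const (Real.exp s)).mono'
      (((hmeas n).const_mul t).exp.aestronglyMeasurable) (ae_of_all _ fun ω => ?_)
    rw [Real.norm_eq_abs, abs_of_pos (Real.exp_pos _), Real.exp_le_exp]
    have h1 := (hbdd n ω).1
    have := mul_le_mul_of_nonneg_left h1 hs0.le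
    simp only [htdef]
    nlinarith
  have hintZ : Integrable Z0 μ := by
    refine (integrable_const (1:ℝ)).mono' (hmeas _).aestronglyMeasurable
      (ae_of_all _ fun ω => ?_)
    rw [Real.norm_eq_abs]
    exact abs_le.mpr ⟨(hbdd _ ω).1, (hbdd _ ω).2⟩
  have hintZ2 : Integrable (fun ω => (Z0 ω) ^ 2) μ := by
    refine (integrable_const (1:ℝ)).mono' ((hmeas _).pow_const 2).aestronglyMeasurable
      (ae_of_all _ fun ω => ?_)
    rw [Real.norm_eq_abs]
    have h1 := (hbdd ⟨0, hN⟩ ω).1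
    have h2 := (hbdd ⟨0, hN⟩ ω).2
    exact abs_le.mpr ⟨by nlinarith, by nlinarith⟩
  -- bound on the mgf of a single variable
  have hA0 : 0 ≤ Real.exp s - 1 - s := by nlinarith [Real.add_one_le_exp s]
  have hmgf_le : mgf Z0 μ t ≤ Real.exp (-(ρ / (2 * C + 4 / 3))) := by
    have hpt : ∀ ω, Real.exp (t * Z0 ω)
        ≤ 1 - s * Z0 ω + (Real.exp s - 1 - s) * (Z0 ω) ^ 2 := by
      intro ω
      have hzb : |(-Z0 ω)| ≤ 1 := by
        rw [abs_le]
        constructor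
        · linarith [(hbdd ⟨0, hN⟩ ω).2]
        · linarith [(hbdd ⟨0, hN⟩ ω).1]
      have h := exp_mul_le_quad hs0.le hzb
      calc Real.exp (t * Z0 ω) = Real.exp (s * (-Z0 ω)) := by rw [htdef]; ring_nf
        _ ≤ 1 + s * (-Z0 ω) + (-Z0 ω) ^ 2 * (Real.exp s - 1 - s) := h
        _ = 1 - s * Z0 ω + (Real.exp s - 1 - s) * (Z0 ω) ^ 2 := by ring
    have hmono : mgf Z0 μ t
        ≤ ∫ ω, (1 - s * Z0 ω + (Real.exp s - 1 - s) * (Z0 ω) ^ 2) ∂μ := by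
      have : mgf Z0 μ t = ∫ ω, Real.exp (t * Z0 ω) ∂μ := rfl
      rw [this]
      exact integral_mono (hint_exp ⟨0, hN⟩)
        (((integrable_const 1).sub (hintZ.const_mul s)).add (hintZ2.const_mul _)) hpt
    have hcalc : ∫ ω, (1 - s * Z0 ω + (Real.exp s - 1 - s) * (Z0 ω) ^ 2) ∂μ
        = 1 - s * (∫ ω, Z0 ω ∂μ) + (Real.exp s - 1 - s) * ∫ ω, (Z0 ω) ^ 2 ∂μ := by
      have i1 : Integrable (fun ω => 1 - s * Z0 ω) μ := (integrable_const 1).sub (hintZ.const_mul s)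
      have i2 : Integrable (fun ω => (Real.exp s - 1 - s) * Z0 ω ^ 2) μ := hintZ2.const_mul _
      rw [integral_add i1 i2, integral_sub (integrable_const 1) (hintZ.const_mul s),
        integral_const, integral_const_mul, integral_const_mul]
      simp
    have h1 : 1 - s * (∫ ω, Z0 ω ∂μ) + (Real.exp s - 1 - s) * ∫ ω, (Z0 ω) ^ 2 ∂μ
        ≤ 1 - s * ρ + (Real.exp s - 1 - s) * (C * ρ) := by
      have i1 := mul_le_mul_of_nonneg_left hvar hA0
      have i2 := mul_le_mul_of_nonneg_left hmean hs0.le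
      linarith
    have h2 : 1 - s * ρ + (Real.exp s - 1 - s) * (C * ρ)
        ≤ Real.exp (-(s * ρ) + (Real.exp s - 1 - s) * (C * ρ)) := by
      have := Real.add_one_le_exp (-(s * ρ) + (Real.exp s - 1 - s) * (C * ρ))
      linarith
    have h3 : -(s * ρ) + (Real.exp s - 1 - s) * (C * ρ) ≤ -(ρ / (2 * C + 4 / 3)) := by
      have hk := keyB hC
      rw [← hsdef] at hk
      have hk' := mul_le_mul_of_nonneg_right hk hρ0.le
      have hx : (s - 1 / (2 * C + 4 / 3)) * ρ = s * ρ - ρ / (2 * C + 4 / 3) := by ring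
      nlinarith [hk', hx]
    calc mgf Z0 μ t ≤ _ := hmono
      _ = _ := hcalc
      _ ≤ _ := h1
      _ ≤ _ := h2
      _ ≤ Real.exp (-(ρ / (2 * C + 4 / 3))) := Real.exp_le_exp.mpr h3
  -- Chernoff bound for the sum
  have hcher := measure_le_le_exp_mul_mgf (X := ∑ i, Z i) (μ := μ) (t := t) 0 ht0
    (hindep.integrable_exp_mul_sum hmeas (fun i _ => hint_exp i))
  have hsets : {ω | ∑ n, Z n ω ≤ 0} = {ω | (∑ i, Z i) ω ≤ 0} := by
    ext ω; simp [Finset.sum_apply]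
  have hprod : mgf (∑ i, Z i) μ t = mgf Z0 μ t ^ N := by
    rw [hindep.mgf_sum hmeas Finset.univ]
    have : ∀ n ∈ Finset.univ, mgf (Z n) μ t = mgf Z0 μ t := by
      intro n _
      exact ((hident n ⟨0, hN⟩).comp (measurable_exp.comp (measurable_id.const_mul t))).integral_eq
    rw [Finset.prod_congr rfl this, Finset.prod_const, Finset.card_univ, Fintype.card_fin]
  have hfinal : (μ {ω | ∑ n, Z n ω ≤ 0}).toReal
      ≤ Real.exp (-(N * ρ) / (2 * C + 4 / 3)) := by
    rw [hsets]
    calc (μ {ω | (∑ i, Z i) ω ≤ 0}).toReal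
        ≤ Real.exp (-t * 0) * mgf (∑ i, Z i) μ t := hcher
      _ = mgf Z0 μ t ^ N := by rw [hprod]; simp
      _ ≤ Real.exp (-(ρ / (2 * C + 4 / 3))) ^ N :=
          pow_le_pow_left₀ mgf_nonneg hmgf_le N
      _ = Real.exp (-(N * ρ) / (2 * C + 4 / 3)) := by
          rw [← Real.exp_nat_mul]
          congr 1
          ring
  rw [← ENNReal.ofReal_toReal (measure_ne_top μ _)]
  exact ENNReal.ofReal_le_ofReal hfinal
end

section
/- Let f : ℝ^d → ℝ be differentiable and let k ∈ {1, …, d}. The following are equivalent: (1) there exists a linear subspace V ⊂ ℝ^d with dim(V) = k such that ∇f(x) ∈ V for all x ∈ ℝ^d; (2) there exist a matrix A ∈ ℝ^{k×d} of full row rank and a differentiable function g : ℝ^k → ℝ such that f(x) = g(Ax) for all x ∈ ℝ^d. -/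
open Real RealInnerProductSpace

lemma rank_eq_finrank_range_toEuclideanLin {m n : ℕ} (A : Matrix (Fin m) (Fin n) ℝ) :
    A.rank = Module.finrank ℝ (LinearMap.range (Matrix.toEuclideanLin A)) := by
  rw [Matrix.rank_eq_finrank_range_toLin A (PiLp.basisFun 2 ℝ (Fin m)) (PiLp.basisFun 2 ℝ (Fin n)),
    ← Matrix.toEuclideanLin_eq_toLin]

lemma inner_gradient' {d : ℕ} (f : EuclideanSpace ℝ (Fin d) → ℝ)
    (x v : EuclideanSpace ℝ (Fin d)) :
    ⟪gradient f x, v⟫ = fderiv ℝ f x v := by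
  simp [gradient, InnerProductSpace.toDual_symm_apply]

lemma flat_dir {d : ℕ} (f : EuclideanSpace ℝ (Fin d) → ℝ) (hf : Differentiable ℝ f)
    (v : EuclideanSpace ℝ (Fin d)) (hv : ∀ x, fderiv ℝ f x v = 0)
    (x : EuclideanSpace ℝ (Fin d)) : f (x + v) = f x := by
  set c : ℝ → EuclideanSpace ℝ (Fin d) := fun t => x + t • v with hc
  have hcd : ∀ t : ℝ, HasDerivAt c v t := by
    intro t
    have h := ((hasDerivAt_id t).smul_const v).const_add x
    rw [one_smul] at h
    exact h
  have hder : ∀ t : ℝ, HasDerivAt (f ∘ c) (fderiv ℝ f (c t) v) t := fun t =>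
    (hf (c t)).hasFDerivAt.comp_hasDerivAt t (hcd t)
  have hconst : (f ∘ c) 1 = (f ∘ c) 0 := by
    apply is_const_of_deriv_eq_zero
    · exact fun t => (hder t).differentiableAt
    · intro t; rw [(hder t).deriv]; exact hv (c t)
  simpa [hc] using hconst

/-- A differentiable `f : ℝ^d → ℝ` has all its gradients in a fixed
`k`-dimensional subspace iff it admits a ridge representation `f(x) = g(Ax)`
with `A ∈ ℝ^{k×d}` of full row rank and `g : ℝ^k → ℝ` differentiable. -/
theorem gradient_subspace_iff_ridge
    {d k : ℕ} (hk : 1 ≤ k) (hkd : k ≤ d)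
    (f : EuclideanSpace ℝ (Fin d) → ℝ) (hf : Differentiable ℝ f) :
    (∃ V : Submodule ℝ (EuclideanSpace ℝ (Fin d)),
        Module.finrank ℝ V = k ∧ ∀ x, gradient f x ∈ V) ↔
    (∃ A : Matrix (Fin k) (Fin d) ℝ, A.rank = k ∧
      ∃ g : EuclideanSpace ℝ (Fin k) → ℝ, Differentiable ℝ g ∧
        ∀ x, f x = g (Matrix.toEuclideanLin A x)) := by
  constructor
  · rintro ⟨V, hVk, hgrad⟩
    haveI : FiniteDimensional ℝ V := FiniteDimensional.finiteDimensional_submodule V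
    -- orthonormal basis of V indexed by Fin k
    let b : OrthonormalBasis (Fin k) ℝ V :=
      (stdOrthonormalBasis ℝ V).reindex (finCongr hVk)
    let P := V.orthogonalProjection
    let L : EuclideanSpace ℝ (Fin d) →ₗ[ℝ] EuclideanSpace ℝ (Fin k) :=
      (b.repr.toLinearEquiv.toLinearMap).comp P.toLinearMap
    refine ⟨Matrix.toEuclideanLin.symm L, ?_, fun y => f ((b.repr.symm y : V) : EuclideanSpace ℝ (Fin d)), ?_, ?_⟩
    · -- rank
      rw [rank_eq_finrank_range_toEuclideanLin, LinearEquiv.apply_symm_apply]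
      have hsurj : Function.Surjective L := by
        intro y
        refine ⟨((b.repr.symm y : V) : EuclideanSpace ℝ (Fin d)), ?_⟩
        simp [L, P, Submodule.orthogonalProjection_mem_subspace_eq_self]
      rw [LinearMap.range_eq_top.mpr hsurj]
      simp [finrank_euclideanSpace_fin]
    · -- differentiability of g
      have : Differentiable ℝ fun y : EuclideanSpace ℝ (Fin k) =>
          ((b.repr.symm y : V) : EuclideanSpace ℝ (Fin d)) := by
        exact (V.subtypeL.differentiable).comp (b.repr.symm.toContinuousLinearEquiv.differentiable)
      exact hf.comp this
    · -- f x = g (A x)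
      intro x
      rw [LinearEquiv.apply_symm_apply]
      have hLx : (b.repr.symm (L x) : V) = P x := by
        simp [L]
      show f x = f ((b.repr.symm (L x) : V) : EuclideanSpace ℝ (Fin d))
      rw [hLx]
      -- f ((P x : E)) = f x
      have hmem : x - (P x : EuclideanSpace ℝ (Fin d)) ∈ Vᗮ :=
        V.sub_starProjection_mem_orthogonal x
      have hv : ∀ y, fderiv ℝ f y (x - (P x : EuclideanSpace ℝ (Fin d))) = 0 := by
        intro y
        rw [← inner_gradient']
        exact hmem (gradient f y) (hgrad y)
      have := flat_dir f hf _ hv ((P x : EuclideanSpace ℝ (Fin d)))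
      simpa using this
  · rintro ⟨A, hA, g, hg, hfg⟩
    set L := Matrix.toEuclideanLin A with hL
    let Lc : EuclideanSpace ℝ (Fin d) →L[ℝ] EuclideanSpace ℝ (Fin k) :=
      LinearMap.toContinuousLinearMap L
    refine ⟨LinearMap.range (Matrix.toEuclideanLin A.conjTranspose), ?_, ?_⟩
    · rw [← rank_eq_finrank_range_toEuclideanLin, Matrix.rank_conjTranspose, hA]
    · intro x
      have hfe : f = fun x => g (Lc x) := funext fun x => hfg x
      have hfd : fderiv ℝ f x = (fderiv ℝ g (Lc x)).comp Lc := by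
        rw [hfe]
        exact fderiv_comp x (hg (Lc x)) Lc.differentiableAt |>.trans (by rw [Lc.fderiv])
      have : gradient f x = (LinearMap.adjoint (L : EuclideanSpace ℝ (Fin d) →ₗ[ℝ] EuclideanSpace ℝ (Fin k))) (gradient g (Lc x)) := by
        apply ext_inner_right ℝ
        intro v
        rw [inner_gradient', hfd, LinearMap.adjoint_inner_left, inner_gradient']
        rfl
      rw [this, ← Matrix.toEuclideanLin_conjTranspose_eq_adjoint A]
      exact LinearMap.mem_range_self _ _
end

section
/- Let η : ℝ^d → ℝ be differentiable, let A ∈ ℝ^{k×d} have full row rank with orthogonal projector P := Aᵀ(AAᵀ)⁻¹A onto range(Aᵀ), and suppose there exist a subspace W ⊆ ker(A) with orthogonal projector Q and a constant τ ≥ 0 such that for all x ∈ ℝ^d: (I − P)∇η(x) ∈ W and ‖(I − P)∇η(x)‖₂ ≤ τ. Then for every x, s ∈ ℝ^d and α > 0, the function f(x) := g(Ax) + η(x) (for any g : ℝ^k → ℝ) satisfies |f(x + α s) − f(x + α P s)| ≤ τ · α · ‖Q s‖₂. -/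
open Real RealInnerProductSpace

/-- Approximate invariance to inactive directions: if the inactive gradient
`(I − P)∇η` lies in a subspace `W ⊆ ker(A)` (with orthogonal projector `Q`) and
is bounded by `τ`, then for `f(x) = g(Ax) + η(x)`,
`|f(x + αs) − f(x + αPs)| ≤ τ α ‖Qs‖`, where `P = Aᵀ(AAᵀ)⁻¹A`. -/
theorem nearly_ridge_approx_invariance
    {d k : ℕ} (hkd : k ≤ d)
    (A : Matrix (Fin k) (Fin d) ℝ) (hA : A.rank = k)
    (g : EuclideanSpace ℝ (Fin k) → ℝ)
    (η : EuclideanSpace ℝ (Fin d) → ℝ) (hη : Differentiable ℝ η)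
    (P : Matrix (Fin d) (Fin d) ℝ)
    (hP : P = A.transpose * (A * A.transpose)⁻¹ * A)
    (W : Submodule ℝ (EuclideanSpace ℝ (Fin d)))
    (hWker : W ≤ LinearMap.ker (Matrix.toEuclideanLin A))
    (τ : ℝ) (hτ : 0 ≤ τ)
    (hmem : ∀ x, gradient η x - Matrix.toEuclideanLin P (gradient η x) ∈ W)
    (hbdd : ∀ x, ‖gradient η x - Matrix.toEuclideanLin P (gradient η x)‖ ≤ τ)
    (f : EuclideanSpace ℝ (Fin d) → ℝ)
    (hf : ∀ x, f x = g (Matrix.toEuclideanLin A x) + η x)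
    (x s : EuclideanSpace ℝ (Fin d)) (α : ℝ) (hα : 0 < α) :
    |f (x + α • s) - f (x + α • Matrix.toEuclideanLin P s)| ≤
      τ * α * ‖(Submodule.orthogonalProjection W s : EuclideanSpace ℝ (Fin d))‖ := by
  -- invertibility of A * Aᵀ
  have hdet : IsUnit (A * A.transpose).det := by
    rw [← Matrix.isUnit_iff_isUnit_det]
    rw [← Matrix.mulVec_surjective_iff_isUnit]
    have hr : (A * A.transpose).rank = k := by
      rw [Matrix.rank_self_mul_transpose, hA]
    have : LinearMap.range (A * A.transpose).mulVecLin = ⊤ := by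
      apply Submodule.eq_top_of_finrank_eq
      rw [← Matrix.rank, hr]
      simp [Module.finrank_pi]
    intro v
    have := this ▸ Submodule.mem_top (x := v) (R := ℝ)
    obtain ⟨w, hw⟩ := LinearMap.mem_range.mp this
    exact ⟨w, hw⟩
  have hAP : A * P = A := by
    rw [hP, ← Matrix.mul_assoc, ← Matrix.mul_assoc,
      Matrix.mul_nonsing_inv _ hdet, Matrix.one_mul]
  have hPP : P * P = P := by
    calc P * P = A.transpose * (A * A.transpose)⁻¹ * (A * P) := by
          nth_rewrite 1 [hP]; rw [Matrix.mul_assoc]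
      _ = A.transpose * (A * A.transpose)⁻¹ * A := by rw [hAP]
      _ = P := hP.symm
  have hPT : P.transpose = P := by
    rw [hP]
    rw [Matrix.transpose_mul, Matrix.transpose_mul, Matrix.transpose_transpose,
      Matrix.transpose_nonsing_inv, Matrix.transpose_mul, Matrix.transpose_transpose,
      Matrix.mul_assoc]
  -- self-adjointness of toEuclideanLin P
  have hPH : P.conjTranspose = P := by
    ext i j
    simp only [Matrix.conjTranspose_apply, star_trivial]
    exact congrFun (congrFun hPT i) j
  have hadj : ∀ v u : EuclideanSpace ℝ (Fin d),
      ⟪Matrix.toEuclideanLin P v, u⟫ = ⟪v, Matrix.toEuclideanLin P u⟫ := by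
    intro v u
    conv_lhs => rw [← hPH]
    rw [Matrix.toEuclideanLin_conjTranspose_eq_adjoint, LinearMap.adjoint_inner_left]
  -- composition lemma
  have hcomp : ∀ {m n p : Type} [Fintype m] [Fintype n] [Fintype p]
      [DecidableEq m] [DecidableEq n] [DecidableEq p]
      (M : Matrix m n ℝ) (N : Matrix n p ℝ) (v : EuclideanSpace ℝ p),
      Matrix.toEuclideanLin (M * N) v = Matrix.toEuclideanLin M (Matrix.toEuclideanLin N v) := by
    intro m n p _ _ _ _ _ _ M N v
    simp [Matrix.toEuclideanLin_apply, Matrix.mulVec_mulVec]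
  have hPPs : Matrix.toEuclideanLin P (Matrix.toEuclideanLin P s) = Matrix.toEuclideanLin P s := by
    rw [← hcomp, hPP]
  have hPw : ∀ w ∈ W, Matrix.toEuclideanLin P w = 0 := by
    intro w hw
    have hw0 : Matrix.toEuclideanLin A w = 0 := hWker hw
    have : P = A.transpose * (A * A.transpose)⁻¹ * A := hP
    rw [this, hcomp, hw0, map_zero]
  set Qs : EuclideanSpace ℝ (Fin d) := (Submodule.orthogonalProjection W s : EuclideanSpace ℝ (Fin d)) with hQs
  set u : EuclideanSpace ℝ (Fin d) := α • (s - Matrix.toEuclideanLin P s) with hu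
  set a : EuclideanSpace ℝ (Fin d) := x + α • Matrix.toEuclideanLin P s with ha
  have hau : a + u = x + α • s := by
    rw [ha, hu, add_assoc, smul_sub, add_sub_cancel]
  have hPu : Matrix.toEuclideanLin P u = 0 := by
    rw [hu, map_smul, map_sub, hPPs, sub_self, smul_zero]
  -- pointwise derivative bound
  have hb : ∀ y : EuclideanSpace ℝ (Fin d), |fderiv ℝ η y u| ≤ τ * (α * ‖Qs‖) := by
    intro y
    set G := gradient η y with hG
    set w := G - Matrix.toEuclideanLin P G with hwdef
    have hfd : fderiv ℝ η y u = ⟪G, u⟫ := by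
      rw [((hη y).hasGradientAt.hasFDerivAt).fderiv]
      exact InnerProductSpace.toDual_apply_apply
    have h2 : ⟪Matrix.toEuclideanLin P G, u⟫ = 0 := by
      rw [hadj, hPu, inner_zero_right]
    have h3 : ⟪w, Matrix.toEuclideanLin P s⟫ = 0 := by
      rw [← hadj, hPw w (hmem y), inner_zero_left]
    have h4 : ⟪w, s - Qs⟫ = 0 := by
      have hmem' : s - Qs ∈ Wᗮ := Submodule.sub_starProjection_mem_orthogonal (K := W) s
      exact hmem' w (hmem y)
    have h5 : ⟪G, u⟫ = α * ⟪w, Qs⟫ := by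
      have : G = w + Matrix.toEuclideanLin P G := by rw [hwdef, sub_add_cancel]
      rw [this, inner_add_left, h2, add_zero, hu, real_inner_smul_right, inner_sub_right, h3,
        sub_zero]
      have : ⟪w, s⟫ = ⟪w, Qs⟫ := by
        have := inner_sub_right (𝕜 := ℝ) w s Qs
        rw [h4] at this
        linarith
      rw [this]
    rw [hfd, h5, abs_mul, abs_of_pos hα]
    have : |⟪w, Qs⟫| ≤ τ * ‖Qs‖ := by
      calc |⟪w, Qs⟫| ≤ ‖w‖ * ‖Qs‖ := abs_real_inner_le_norm w Qs
        _ ≤ τ * ‖Qs‖ := by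
            apply mul_le_mul_of_nonneg_right (hbdd y) (norm_nonneg _)
    calc α * |⟪w, Qs⟫| ≤ α * (τ * ‖Qs‖) := by
          exact mul_le_mul_of_nonneg_left this hα.le
      _ = τ * (α * ‖Qs‖) := by ring
  -- mean value inequality
  have hmvt : |η (a + u) - η a| ≤ τ * (α * ‖Qs‖) := by
    have hderiv : ∀ t ∈ Set.Icc (0 : ℝ) 1,
        HasDerivWithinAt (fun t : ℝ => η (a + t • u)) (fderiv ℝ η (a + t • u) u)
          (Set.Icc (0 : ℝ) 1) t := by
      intro t _
      have hc : HasDerivAt (fun t : ℝ => a + t • u) u t := by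
        simpa using ((hasDerivAt_id t).smul_const u).const_add a
      exact (((hη (a + t • u)).hasFDerivAt).comp_hasDerivAt t hc).hasDerivWithinAt
    have := norm_image_sub_le_of_norm_deriv_le_segment_01' hderiv
      (fun t _ => by simpa [Real.norm_eq_abs] using hb (a + t • u))
    simpa [Real.norm_eq_abs, one_smul] using this
  -- cancel the g terms
  have hAeq : Matrix.toEuclideanLin A (x + α • s)
      = Matrix.toEuclideanLin A (x + α • Matrix.toEuclideanLin P s) := by
    have : Matrix.toEuclideanLin A (Matrix.toEuclideanLin P s) = Matrix.toEuclideanLin A s := by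
      rw [← hcomp, hAP]
    simp [map_add, map_smul, this]
  rw [hf, hf, hAeq]
  calc |g (Matrix.toEuclideanLin A (x + α • Matrix.toEuclideanLin P s)) + η (x + α • s) -
        (g (Matrix.toEuclideanLin A (x + α • Matrix.toEuclideanLin P s)) +
          η (x + α • Matrix.toEuclideanLin P s))|
      = |η (a + u) - η a| := by rw [hau, ha]; ring_nf
    _ ≤ τ * (α * ‖Qs‖) := hmvt
    _ = τ * α * ‖Qs‖ := by ring
end

section
/- Let P ∈ ℝ^{d×d} be an orthogonal projector (Pᵀ = P, P² = P) with rank(P) = k, let s be a random vector with standard Gaussian law N(0, I_d) on ℝ^d, and let a ∈ ℝ^d. Then E[(aᵀs)² · ‖Ps‖₂²] = k‖a‖₂² + 2 aᵀPa. In particular, if a ∈ range(P), then E[(aᵀs)² ‖Ps‖₂²] = (k + 2)‖a‖₂². -/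
open MeasureTheory ProbabilityTheory Real

open scoped ENNReal NNReal


lemma integrable_pow_mul_exp (n : ℕ) :
    Integrable (fun x : ℝ => x ^ n * rexp (-(2⁻¹ : ℝ) * x ^ 2)) := by
  have h := integrable_rpow_mul_exp_neg_mul_sq (b := (2⁻¹ : ℝ)) (by norm_num)
    (s := (n : ℝ)) (lt_of_lt_of_le neg_one_lt_zero (Nat.cast_nonneg n))
  simpa [Real.rpow_natCast] using h

lemma J0 : ∫ x : ℝ, rexp (-(2⁻¹ : ℝ) * x ^ 2) = √(2 * π) := by
  rw [integral_gaussian]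
  rw [show π / 2⁻¹ = 2 * π by ring]

lemma J_rec (n : ℕ) :
    ∫ x : ℝ, x ^ (n + 2) * rexp (-(2⁻¹ : ℝ) * x ^ 2)
      = (n + 1 : ℝ) * ∫ x : ℝ, x ^ n * rexp (-(2⁻¹ : ℝ) * x ^ 2) := by
  have hv : ∀ x : ℝ, HasDerivAt (fun y : ℝ => -rexp (-(2⁻¹ : ℝ) * y ^ 2))
      (x * rexp (-(2⁻¹ : ℝ) * x ^ 2)) x := by
    intro x
    have h1 : HasDerivAt (fun y : ℝ => -(2⁻¹ : ℝ) * y ^ 2) (-(2⁻¹ : ℝ) * (2 * x)) x :=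
      ((hasDerivAt_pow 2 x).const_mul _).congr_deriv (by simp)
    have : HasDerivAt (fun y : ℝ => -rexp (-(2⁻¹ : ℝ) * y ^ 2))
        (-(rexp (-(2⁻¹ : ℝ) * x ^ 2) * (-(2⁻¹ : ℝ) * (2 * x)))) x := (h1.exp).neg
    convert this using 1
    ring
  have hu : ∀ x : ℝ, HasDerivAt (fun y : ℝ => y ^ (n + 1)) ((n + 1 : ℝ) * x ^ n) x := by
    intro x
    simpa using hasDerivAt_pow (n + 1) x
  have h := integral_mul_deriv_eq_deriv_mul_of_integrable (fun x _ => hu x) (fun x _ => hv x) ?_ ?_ ?_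
  · rw [show (fun x : ℝ => x ^ (n+2) * rexp (-(2⁻¹ : ℝ) * x ^ 2))
        = fun x : ℝ => x ^ (n+1) * (x * rexp (-(2⁻¹ : ℝ) * x ^ 2)) from funext fun x => by ring]
    rw [h, ← integral_neg]
    rw [show (fun x : ℝ => -((n + 1 : ℝ) * x ^ n * -rexp (-(2⁻¹ : ℝ) * x ^ 2)))
        = fun x : ℝ => (n + 1 : ℝ) * (x ^ n * rexp (-(2⁻¹ : ℝ) * x ^ 2)) from funext fun x => by ring]
    · rw [integral_const_mul]
  · have := integrable_pow_mul_exp (n + 2)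
    apply Integrable.congr this
    filter_upwards with x
    show _ = _
    simp only [Pi.mul_apply]
    ring
  · have := (integrable_pow_mul_exp n).const_mul (-(n+1) : ℝ)
    apply Integrable.congr this
    filter_upwards with x
    show _ = _
    simp only [Pi.mul_apply]
    ring
  · have := (integrable_pow_mul_exp (n+1)).neg
    apply Integrable.congr this
    filter_upwards with x
    show _ = _
    simp only [Pi.mul_apply, Pi.neg_apply]
    ring

lemma J1 : ∫ x : ℝ, x ^ 1 * rexp (-(2⁻¹ : ℝ) * x ^ 2) = 0 := by
  have hv : ∀ x : ℝ, HasDerivAt (fun y : ℝ => -rexp (-(2⁻¹ : ℝ) * y ^ 2))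
      (x * rexp (-(2⁻¹ : ℝ) * x ^ 2)) x := by
    intro x
    have h1 : HasDerivAt (fun y : ℝ => -(2⁻¹ : ℝ) * y ^ 2) (-(2⁻¹ : ℝ) * (2 * x)) x :=
      ((hasDerivAt_pow 2 x).const_mul _).congr_deriv (by simp)
    have : HasDerivAt (fun y : ℝ => -rexp (-(2⁻¹ : ℝ) * y ^ 2))
        (-(rexp (-(2⁻¹ : ℝ) * x ^ 2) * (-(2⁻¹ : ℝ) * (2 * x)))) x := (h1.exp).neg
    convert this using 1
    ring
  have hu : ∀ x : ℝ, HasDerivAt (fun _ : ℝ => (1 : ℝ)) ((0 : ℝ)) x := fun x => hasDerivAt_const x 1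
  have h := integral_mul_deriv_eq_deriv_mul_of_integrable (fun x _ => hu x) (fun x _ => hv x) ?_ ?_ ?_
  · rw [show (fun x : ℝ => x ^ 1 * rexp (-(2⁻¹ : ℝ) * x ^ 2))
        = fun x : ℝ => (1 : ℝ) * (x * rexp (-(2⁻¹ : ℝ) * x ^ 2)) from funext fun x => by ring]
    rw [h]
    simp
  · have := integrable_pow_mul_exp 1
    apply Integrable.congr this
    filter_upwards with x
    show _ = _
    simp only [Pi.mul_apply]
    ring
  · apply (integrable_zero _ _ _).congr
    filter_upwards with x
    show _ = _
    simp [Pi.mul_apply]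
  · have := (integrable_pow_mul_exp 0).neg
    apply Integrable.congr this
    filter_upwards with x
    show _ = _
    simp only [Pi.mul_apply, Pi.neg_apply]
    ring

lemma gaussianPDFReal_zero_one (x : ℝ) :
    gaussianPDFReal 0 1 x = (√(2 * π))⁻¹ * rexp (-(2⁻¹ : ℝ) * x ^ 2) := by
  simp only [gaussianPDFReal, NNReal.coe_one, mul_one, sub_zero]
  congr 1
  ring_nf

lemma integral_gaussianReal_eq (f : ℝ → ℝ) :
    ∫ x, f x ∂(gaussianReal 0 1)
      = (√(2 * π))⁻¹ * ∫ x, f x * rexp (-(2⁻¹ : ℝ) * x ^ 2) := by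
  rw [gaussianReal_of_var_ne_zero 0 one_ne_zero]
  have hmeas : Measurable fun x => Real.toNNReal (gaussianPDFReal 0 1 x) :=
    (measurable_gaussianPDFReal 0 1).real_toNNReal
  rw [show gaussianPDF 0 1 = fun x => ((Real.toNNReal (gaussianPDFReal 0 1 x) : ℝ≥0) : ℝ≥0∞)
      from rfl]
  rw [integral_withDensity_eq_integral_smul hmeas f]
  rw [← integral_const_mul]
  congr 1
  funext x
  rw [NNReal.smul_def, smul_eq_mul, Real.coe_toNNReal _ (gaussianPDFReal_nonneg 0 1 x),
    gaussianPDFReal_zero_one]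
  ring

lemma integrable_pow_gaussianReal (n : ℕ) :
    Integrable (fun x : ℝ => x ^ n) (gaussianReal 0 1) := by
  rw [gaussianReal_of_var_ne_zero 0 one_ne_zero]
  have hmeas : Measurable fun x => Real.toNNReal (gaussianPDFReal 0 1 x) :=
    (measurable_gaussianPDFReal 0 1).real_toNNReal
  rw [show gaussianPDF 0 1 = fun x => ((Real.toNNReal (gaussianPDFReal 0 1 x) : ℝ≥0) : ℝ≥0∞)
      from rfl]
  rw [integrable_withDensity_iff_integrable_smul hmeas]
  apply ((integrable_pow_mul_exp n).const_mul ((√(2 * π))⁻¹)).congr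
  filter_upwards with x
  rw [NNReal.smul_def, smul_eq_mul, Real.coe_toNNReal _ (gaussianPDFReal_nonneg 0 1 x),
    gaussianPDFReal_zero_one]
  ring

lemma sqrt_two_pi_pos : (0:ℝ) < √(2 * π) := Real.sqrt_pos.2 (by positivity)

/-- moments of the standard gaussian -/
lemma M0 : ∫ x, x ^ 0 ∂(gaussianReal 0 1) = 1 := by
  rw [integral_gaussianReal_eq]
  simp only [pow_zero, one_mul]
  rw [J0]
  field_simp

lemma M1 : ∫ x, x ^ 1 ∂(gaussianReal 0 1) = 0 := by
  rw [integral_gaussianReal_eq, J1, mul_zero]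

lemma M2 : ∫ x, x ^ 2 ∂(gaussianReal 0 1) = 1 := by
  rw [integral_gaussianReal_eq]
  have := J_rec 0
  simp only [pow_zero, one_mul, Nat.cast_zero, zero_add] at this
  rw [this, J0]
  field_simp

lemma M3 : ∫ x, x ^ 3 ∂(gaussianReal 0 1) = 0 := by
  rw [integral_gaussianReal_eq]
  have := J_rec 1
  rw [show (1+2)=3 from rfl] at this
  rw [this, J1]
  simp

lemma M4 : ∫ x, x ^ 4 ∂(gaussianReal 0 1) = 3 := by
  rw [integral_gaussianReal_eq]
  have h2 := J_rec 2
  rw [show (2+2)=4 from rfl] at h2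
  have h0 := J_rec 0
  simp only [pow_zero, one_mul, Nat.cast_zero, zero_add] at h0
  rw [h2, h0, J0]
  have := sqrt_two_pi_pos.ne'
  push_cast
  field_simp
  ring

lemma pi_integral {d : ℕ} (f : Fin d → ℝ → ℝ) :
    ∫ x : Fin d → ℝ, ∏ t, f t (x t) ∂(Measure.pi fun _ => gaussianReal 0 1)
      = ∏ t, ∫ y, f t y ∂(gaussianReal 0 1) := by
  letI : MeasureSpace ℝ := ⟨gaussianReal 0 1⟩
  haveI : SigmaFinite (volume : Measure ℝ) := inferInstanceAs (SigmaFinite (gaussianReal 0 1))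
  exact integral_fintype_prod_eq_prod f

lemma pi_integrable {d : ℕ} (f : Fin d → ℝ → ℝ) (hf : ∀ t, Integrable (f t) (gaussianReal 0 1)) :
    Integrable (fun x : Fin d → ℝ => ∏ t, f t (x t)) (Measure.pi fun _ => gaussianReal 0 1) := by
  letI : MeasureSpace ℝ := ⟨gaussianReal 0 1⟩
  haveI : SigmaFinite (volume : Measure ℝ) := inferInstanceAs (SigmaFinite (gaussianReal 0 1))
  exact Integrable.fintype_prod hf

/-- exponent function of the monomial `x i * x j * x m * x q` -/
def eF {d : ℕ} (i j m q t : Fin d) : ℕ :=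
  (if t = i then 1 else 0) + (if t = j then 1 else 0) + (if t = m then 1 else 0)
    + (if t = q then 1 else 0)

lemma monomial_eq {d : ℕ} (i j m q : Fin d) (x : Fin d → ℝ) :
    x i * x j * x m * x q = ∏ t, x t ^ eF i j m q t := by
  have key : ∀ r : Fin d, ∏ t, x t ^ (if t = r then 1 else 0) = x r := by
    intro r
    rw [Finset.prod_eq_single r (fun b _ hb => by simp [hb]) (fun h => absurd (Finset.mem_univ r) h)]
    simp
  simp only [eF, pow_add, Finset.prod_mul_distrib, key]

lemma monomial_integrable {d : ℕ} (i j m q : Fin d) :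
    Integrable (fun x : Fin d → ℝ => x i * x j * x m * x q)
      (Measure.pi fun _ => gaussianReal 0 1) := by
  have := pi_integrable (fun t y => y ^ eF i j m q t) (fun t => integrable_pow_gaussianReal _)
  apply this.congr
  filter_upwards with x
  rw [monomial_eq i j m q]

lemma isserlis {d : ℕ} (i j m q : Fin d) :
    ∫ x : Fin d → ℝ, x i * x j * x m * x q ∂(Measure.pi fun _ => gaussianReal 0 1)
      = (if i = j then (1:ℝ) else 0) * (if m = q then 1 else 0)
        + (if i = m then 1 else 0) * (if j = q then 1 else 0)
        + (if i = q then 1 else 0) * (if j = m then 1 else 0) := by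
  simp_rw [monomial_eq i j m q]
  rw [pi_integral (fun t y => y ^ eF i j m q t)]
  -- helper evaluators
  have hval : ∀ n : ℕ, n = 0 ∨ n = 2 ∨ n = 4 →
      ∫ y, y ^ n ∂(gaussianReal 0 1) = if n = 4 then 3 else 1 := by
    rintro n (rfl | rfl | rfl)
    · simpa using M0
    · simpa using M2
    · simpa using M4
  have hodd : ∀ n : ℕ, n = 1 ∨ n = 3 → ∫ y, y ^ n ∂(gaussianReal 0 1) = 0 := by
    rintro n (rfl | rfl)
    · exact M1
    · exact M3
  have hzero : ∀ w : Fin d, (eF i j m q w = 1 ∨ eF i j m q w = 3) →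
      ∏ t, ∫ y, y ^ eF i j m q t ∂(gaussianReal 0 1) = 0 := by
    intro w hw
    exact Finset.prod_eq_zero (Finset.mem_univ w) (hodd _ hw)
  have hpair : ∀ w₁ w₂ : Fin d, w₁ ≠ w₂ → eF i j m q w₁ = 2 → eF i j m q w₂ = 2 →
      (∀ t, t ≠ w₁ → t ≠ w₂ → eF i j m q t = 0) →
      ∏ t, ∫ y, y ^ eF i j m q t ∂(gaussianReal 0 1) = 1 := by
    intro w₁ w₂ hne h1 h2 h0
    rw [← Finset.prod_subset (Finset.subset_univ ({w₁, w₂} : Finset (Fin d)))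
      (fun t _ ht => by
        simp only [Finset.mem_insert, Finset.mem_singleton, not_or] at ht
        rw [h0 t ht.1 ht.2]; simpa using M0)]
    rw [Finset.prod_pair hne, h1, h2, M2, mul_one]
  have hquad : ∀ w : Fin d, eF i j m q w = 4 → (∀ t, t ≠ w → eF i j m q t = 0) →
      ∏ t, ∫ y, y ^ eF i j m q t ∂(gaussianReal 0 1) = 3 := by
    intro w h4 h0
    rw [Finset.prod_eq_single w (fun t _ ht => by rw [h0 t ht]; simpa using M0)
      (fun h => absurd (Finset.mem_univ w) h), h4, M4]
  by_cases hij : i = j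
  · subst hij
    by_cases hmq : m = q
    · subst hmq
      by_cases him : i = m
      · subst him
        rw [hquad i (by simp [eF]) (fun t ht => by simp [eF, ht])]
        norm_num
      · rw [hpair i m him (by simp [eF, him, Ne.symm him]) (by simp [eF, him, Ne.symm him])
          (fun t ht1 ht2 => by simp [eF, ht1, ht2])]
        simp [him]
    · by_cases him : i = m
      · subst him
        rw [hzero q (Or.inl (by simp [eF, Ne.symm hmq]))]
        simp [hmq, Ne.symm hmq]
      · rw [hzero m (Or.inl (by simp [eF, Ne.symm him, hmq]))]
        simp [hmq, him]
  · by_cases him : i = m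
    · subst him
      by_cases hjq : j = q
      · subst hjq
        rw [hpair i j hij (by simp [eF, hij, Ne.symm hij]) (by simp [eF, hij, Ne.symm hij])
          (fun t ht1 ht2 => by simp [eF, ht1, ht2])]
        simp [hij, Ne.symm hij]
      · by_cases hqi : q = i
        · have h' : i = q := hqi.symm
          rw [hzero i (Or.inr (by simp [eF, hij, h', Ne.symm hjq]))]
          simp [hij, hjq, Ne.symm hij]
        · rw [hzero q (Or.inl (by simp [eF, hqi, Ne.symm hjq]))]
          simp [hij, hjq, Ne.symm hqi]
    · by_cases hiq : i = q
      · subst hiq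
        by_cases hjm : j = m
        · subst hjm
          rw [hpair i j hij (by simp [eF, hij, Ne.symm hij]) (by simp [eF, hij, Ne.symm hij])
            (fun t ht1 ht2 => by simp [eF, ht1, ht2])]
          simp [hij, him, Ne.symm hij]
        · rw [hzero m (Or.inl (by simp [eF, Ne.symm him, Ne.symm hjm]))]
          simp [hij, him, hjm]
      · rw [hzero i (Or.inl (by simp [eF, hij, him, hiq]))]
        simp [hij, him, hiq]

lemma trace_eq_rank' {d k : ℕ} (P : Matrix (Fin d) (Fin d) ℝ)
    (hidem : P * P = P) (hrank : P.rank = k) : Matrix.trace P = (k : ℝ) := by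
  have hproj : LinearMap.IsProj (LinearMap.range P.mulVecLin) P.mulVecLin :=
    ⟨fun x => LinearMap.mem_range_self _ x, fun x hx => by
      obtain ⟨y, rfl⟩ := hx
      rw [← LinearMap.comp_apply, ← Matrix.mulVecLin_mul, hidem]⟩
  have h := hproj.trace
  have h2 : LinearMap.trace ℝ (Fin d → ℝ) P.mulVecLin = Matrix.trace P := by
    rw [show P.mulVecLin = Matrix.toLin' P from rfl, ← Matrix.toLin_eq_toLin',
      LinearMap.trace_eq_matrix_trace ℝ (Pi.basisFun ℝ (Fin d)), LinearMap.toMatrix_toLin]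
  rw [h2] at h
  rw [h, show Module.finrank ℝ (LinearMap.range P.mulVecLin) = P.rank from rfl, hrank]

/-- The standard Gaussian measure `N(0, I_d)` on `ℝ^d`. -/
noncomputable def stdGaussian (d : ℕ) : Measure (EuclideanSpace ℝ (Fin d)) :=
  (Measure.pi fun _ : Fin d => gaussianReal 0 1).map (EuclideanSpace.equiv (Fin d) ℝ).symm

/-- For a rank-`k` orthogonal projector `P`, `s ~ N(0, I_d)` and `a ∈ ℝ^d`:
`E[(aᵀs)² ‖Ps‖²] = k ‖a‖² + 2 aᵀPa`; if moreover `a ∈ range(P)`, this equals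
`(k+2) ‖a‖²`. -/
theorem gaussian_inner_sq_proj_norm_sq
    {d k : ℕ} (P : Matrix (Fin d) (Fin d) ℝ)
    (hsymm : P.transpose = P) (hidem : P * P = P) (hrank : P.rank = k)
    (a : EuclideanSpace ℝ (Fin d)) :
    (∫ s, (inner ℝ a s : ℝ) ^ 2 * ‖Matrix.toEuclideanLin P s‖ ^ 2 ∂(stdGaussian d)) =
        k * ‖a‖ ^ 2 + 2 * (inner ℝ a (Matrix.toEuclideanLin P a) : ℝ) ∧
    (a ∈ LinearMap.range (Matrix.toEuclideanLin P) →
      (∫ s, (inner ℝ a s : ℝ) ^ 2 * ‖Matrix.toEuclideanLin P s‖ ^ 2 ∂(stdGaussian d)) =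
        (k + 2) * ‖a‖ ^ 2) := by
  have hmain : (∫ s, (inner ℝ a s : ℝ) ^ 2 * ‖Matrix.toEuclideanLin P s‖ ^ 2 ∂(stdGaussian d)) =
      k * ‖a‖ ^ 2 + 2 * (inner ℝ a (Matrix.toEuclideanLin P a) : ℝ) := by
    have hcont : Continuous fun s : EuclideanSpace ℝ (Fin d) =>
        (inner ℝ a s : ℝ) ^ 2 * ‖Matrix.toEuclideanLin P s‖ ^ 2 :=
      ((continuous_const.inner continuous_id).pow 2).mul
        ((LinearMap.continuous_of_finiteDimensional (Matrix.toEuclideanLin P)).norm.pow 2)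
    rw [_root_.stdGaussian, integral_map
      ((EuclideanSpace.equiv (Fin d) ℝ).symm.continuous.measurable).aemeasurable
      hcont.aestronglyMeasurable]
    have hcoord : ∀ x : Fin d → ℝ,
        (inner ℝ a ((EuclideanSpace.equiv (Fin d) ℝ).symm x) : ℝ) ^ 2
            * ‖Matrix.toEuclideanLin P ((EuclideanSpace.equiv (Fin d) ℝ).symm x)‖ ^ 2
          = (∑ i, a i * x i) ^ 2 * ∑ p, (∑ q, P p q * x q) ^ 2 := by
      intro x
      have h1 : (inner ℝ a ((EuclideanSpace.equiv (Fin d) ℝ).symm x) : ℝ) = ∑ i, a i * x i := by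
        simp [PiLp.inner_apply, RCLike.inner_apply, starRingEnd_apply]
        exact Finset.sum_congr rfl fun _ _ => mul_comm _ _
      have h2 : ‖Matrix.toEuclideanLin P ((EuclideanSpace.equiv (Fin d) ℝ).symm x)‖ ^ 2
          = ∑ p, (∑ q, P p q * x q) ^ 2 := by
        rw [EuclideanSpace.norm_eq, Real.sq_sqrt (by positivity)]
        congr 1
        funext p
        simp [Matrix.toEuclideanLin_apply, Matrix.mulVec, dotProduct,
          Real.norm_eq_abs, sq_abs]
      rw [h1, h2]
    simp_rw [hcoord]
    have hexp : ∀ x : Fin d → ℝ,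
        (∑ i, a i * x i) ^ 2 * ∑ p, (∑ q, P p q * x q) ^ 2
          = ∑ z : Fin d × Fin d × Fin d × Fin d × Fin d,
              a z.2.2.2.2 * a z.2.2.2.1 * P z.1 z.2.2.1 * P z.1 z.2.1
                * (x z.2.2.2.2 * x z.2.2.2.1 * x z.2.2.1 * x z.2.1) := by
      intro x
      simp_rw [Fintype.sum_prod_type]
      simp only [sq, Finset.sum_mul_sum, Finset.sum_mul, Finset.mul_sum]
      refine Finset.sum_congr rfl fun i _ => Finset.sum_congr rfl fun j _ =>
        Finset.sum_congr rfl fun p _ => Finset.sum_congr rfl fun m _ =>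
        Finset.sum_congr rfl fun q _ => by ring
    simp_rw [hexp]
    rw [integral_finset_sum Finset.univ (fun z _ =>
      (monomial_integrable z.2.2.2.2 z.2.2.2.1 z.2.2.1 z.2.1).const_mul _)]
    simp_rw [integral_const_mul, isserlis]
    have key2 : ∀ u v : Fin d, ∑ r, P r u * P r v = P u v := by
      intro u v
      have h : (P.transpose * P) u v = ∑ r, P r u * P r v := by
        simp [Matrix.mul_apply, Matrix.transpose_apply]
      rw [← h, hsymm, hidem]
    have htr : ∑ r, ∑ c, P r c * P r c = (k : ℝ) := by
      rw [Finset.sum_comm]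
      simp_rw [fun c => key2 c c]
      have h := trace_eq_rank' P hidem hrank
      simpa [Matrix.trace, Matrix.diag] using h
    have hnorm : ‖a‖ ^ 2 = ∑ i, a i * a i := by
      rw [EuclideanSpace.norm_eq, Real.sq_sqrt (by positivity)]
      refine Finset.sum_congr rfl fun i _ => ?_
      rw [Real.norm_eq_abs, sq_abs, sq]
    have hinner : (inner ℝ a (Matrix.toEuclideanLin P a) : ℝ) = ∑ u, ∑ v, a u * a v * P u v := by
      simp only [PiLp.inner_apply, RCLike.inner_apply, starRingEnd_apply, star_trivial,
        Matrix.toEuclideanLin_apply]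
      refine Finset.sum_congr rfl fun u _ => ?_
      simp only [Matrix.mulVec, dotProduct]
      rw [Finset.sum_mul]
      refine Finset.sum_congr rfl fun v _ => by ring
    have h1 : ∑ z : Fin d × Fin d × Fin d × Fin d × Fin d,
        a z.2.2.2.2 * a z.2.2.2.1 * P z.1 z.2.2.1 * P z.1 z.2.1
          * ((if z.2.2.2.2 = z.2.2.2.1 then (1:ℝ) else 0) * (if z.2.2.1 = z.2.1 then 1 else 0))
        = (k : ℝ) * ‖a‖ ^ 2 := by
      simp_rw [Fintype.sum_prod_type]
      calc ∑ r, ∑ cJ, ∑ cP, ∑ w, ∑ v, a v * a w * P r cP * P r cJ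
            * ((if v = w then (1:ℝ) else 0) * (if cP = cJ then 1 else 0))
          = ∑ r, ∑ cJ, ∑ cP, ∑ w, a w * a w * P r cP * P r cJ * (if cP = cJ then 1 else 0) := by
            refine Finset.sum_congr rfl fun r _ => Finset.sum_congr rfl fun cJ _ =>
              Finset.sum_congr rfl fun cP _ => Finset.sum_congr rfl fun w _ => ?_
            rw [Finset.sum_eq_single w (fun v _ hv => by simp [hv])
              (fun h => absurd (Finset.mem_univ w) h)]
            simp
        _ = ∑ r, ∑ cJ, ∑ w, a w * a w * P r cJ * P r cJ := by
            refine Finset.sum_congr rfl fun r _ => Finset.sum_congr rfl fun cJ _ => ?_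
            rw [Finset.sum_comm]
            refine Finset.sum_congr rfl fun w _ => ?_
            rw [Finset.sum_eq_single cJ (fun c _ hc => by simp [hc])
              (fun h => absurd (Finset.mem_univ cJ) h)]
            simp
        _ = ∑ r, ∑ cJ, (P r cJ * P r cJ) * ∑ w, a w * a w := by
            refine Finset.sum_congr rfl fun r _ => Finset.sum_congr rfl fun cJ _ => ?_
            rw [Finset.mul_sum]
            refine Finset.sum_congr rfl fun w _ => by ring
        _ = (∑ r, ∑ cJ, P r cJ * P r cJ) * ∑ w, a w * a w := by
            rw [Finset.sum_mul]
            refine Finset.sum_congr rfl fun r _ => (Finset.sum_mul _ _ _).symm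
        _ = (k : ℝ) * ‖a‖ ^ 2 := by rw [htr, hnorm]
    have hgen : ∀ F : Fin d → Fin d → ℝ,
        (∑ r : Fin d, ∑ cJ : Fin d, ∑ cP : Fin d, F cP cJ * (P r cP * P r cJ))
          = ∑ u, ∑ v, F u v * P u v := by
      intro F
      calc ∑ r : Fin d, ∑ cJ : Fin d, ∑ cP : Fin d, F cP cJ * (P r cP * P r cJ)
          = ∑ cJ : Fin d, ∑ r : Fin d, ∑ cP : Fin d, F cP cJ * (P r cP * P r cJ) :=
            Finset.sum_comm
        _ = ∑ cJ : Fin d, ∑ cP : Fin d, ∑ r : Fin d, F cP cJ * (P r cP * P r cJ) :=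
            Finset.sum_congr rfl fun cJ _ => Finset.sum_comm
        _ = ∑ cJ : Fin d, ∑ cP : Fin d, F cP cJ * P cP cJ := by
            refine Finset.sum_congr rfl fun cJ _ => Finset.sum_congr rfl fun cP _ => ?_
            rw [← Finset.mul_sum, key2]
        _ = ∑ u, ∑ v, F u v * P u v := Finset.sum_comm
    have h2 : ∑ z : Fin d × Fin d × Fin d × Fin d × Fin d,
        a z.2.2.2.2 * a z.2.2.2.1 * P z.1 z.2.2.1 * P z.1 z.2.1
          * ((if z.2.2.2.2 = z.2.2.1 then (1:ℝ) else 0) * (if z.2.2.2.1 = z.2.1 then 1 else 0))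
        = (inner ℝ a (Matrix.toEuclideanLin P a) : ℝ) := by
      simp_rw [Fintype.sum_prod_type]
      calc ∑ r, ∑ cJ, ∑ cP, ∑ w, ∑ v, a v * a w * P r cP * P r cJ
            * ((if v = cP then (1:ℝ) else 0) * (if w = cJ then 1 else 0))
          = ∑ r, ∑ cJ, ∑ cP, ∑ w, a cP * a w * P r cP * P r cJ * (if w = cJ then 1 else 0) := by
            refine Finset.sum_congr rfl fun r _ => Finset.sum_congr rfl fun cJ _ =>
              Finset.sum_congr rfl fun cP _ => Finset.sum_congr rfl fun w _ => ?_
            rw [Finset.sum_eq_single cP (fun v _ hv => by simp [hv])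
              (fun h => absurd (Finset.mem_univ cP) h)]
            simp
        _ = ∑ r, ∑ cJ, ∑ cP, a cP * a cJ * P r cP * P r cJ := by
            refine Finset.sum_congr rfl fun r _ => Finset.sum_congr rfl fun cJ _ =>
              Finset.sum_congr rfl fun cP _ => ?_
            rw [Finset.sum_eq_single cJ (fun w _ hw => by simp [hw])
              (fun h => absurd (Finset.mem_univ cJ) h)]
            simp
        _ = ∑ r, ∑ cJ, ∑ cP, (a cP * a cJ) * (P r cP * P r cJ) := by
            refine Finset.sum_congr rfl fun r _ => Finset.sum_congr rfl fun cJ _ =>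
              Finset.sum_congr rfl fun cP _ => by ring
        _ = ∑ u, ∑ v, a u * a v * P u v := hgen (fun u v => a u * a v)
        _ = (inner ℝ a (Matrix.toEuclideanLin P a) : ℝ) := hinner.symm
    have h3 : ∑ z : Fin d × Fin d × Fin d × Fin d × Fin d,
        a z.2.2.2.2 * a z.2.2.2.1 * P z.1 z.2.2.1 * P z.1 z.2.1
          * ((if z.2.2.2.2 = z.2.1 then (1:ℝ) else 0) * (if z.2.2.2.1 = z.2.2.1 then 1 else 0))
        = (inner ℝ a (Matrix.toEuclideanLin P a) : ℝ) := by
      simp_rw [Fintype.sum_prod_type]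
      calc ∑ r, ∑ cJ, ∑ cP, ∑ w, ∑ v, a v * a w * P r cP * P r cJ
            * ((if v = cJ then (1:ℝ) else 0) * (if w = cP then 1 else 0))
          = ∑ r, ∑ cJ, ∑ cP, ∑ w, a cJ * a w * P r cP * P r cJ * (if w = cP then 1 else 0) := by
            refine Finset.sum_congr rfl fun r _ => Finset.sum_congr rfl fun cJ _ =>
              Finset.sum_congr rfl fun cP _ => Finset.sum_congr rfl fun w _ => ?_
            rw [Finset.sum_eq_single cJ (fun v _ hv => by simp [hv])
              (fun h => absurd (Finset.mem_univ cJ) h)]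
            simp
        _ = ∑ r, ∑ cJ, ∑ cP, a cJ * a cP * P r cP * P r cJ := by
            refine Finset.sum_congr rfl fun r _ => Finset.sum_congr rfl fun cJ _ =>
              Finset.sum_congr rfl fun cP _ => ?_
            rw [Finset.sum_eq_single cP (fun w _ hw => by simp [hw])
              (fun h => absurd (Finset.mem_univ cP) h)]
            simp
        _ = ∑ r, ∑ cJ, ∑ cP, (a cP * a cJ) * (P r cP * P r cJ) := by
            refine Finset.sum_congr rfl fun r _ => Finset.sum_congr rfl fun cJ _ =>
              Finset.sum_congr rfl fun cP _ => by ring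
        _ = ∑ u, ∑ v, a u * a v * P u v := hgen (fun u v => a u * a v)
        _ = (inner ℝ a (Matrix.toEuclideanLin P a) : ℝ) := hinner.symm
    simp_rw [mul_add]
    rw [Finset.sum_add_distrib, Finset.sum_add_distrib, h1, h2, h3]
    ring
  refine ⟨hmain, fun ha => ?_⟩
  obtain ⟨b, hb⟩ := ha
  have hPa : Matrix.toEuclideanLin P a = a := by
    rw [← hb, ← LinearMap.comp_apply]
    have hcomp : Matrix.toEuclideanLin (P * P)
        = (Matrix.toEuclideanLin P).comp (Matrix.toEuclideanLin P) := by
      rw [Matrix.toEuclideanLin_eq_toLin]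
      exact Matrix.toLin_mul _ _ _ P P
    rw [← hcomp, hidem]
  rw [hmain, hPa, real_inner_self_eq_norm_sq]
  ring
end
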